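/- Let A = (a_{ij}), i ∈ I, j ∈ J, be a real matrix, let S = {a_{ij} : i ∈ I, j ∈ J} be the set of distinct entry values, and let φ: S → ℝ be any function. Define B by b_{ij} = φ(a_{ij}). If |S| ≤ k and rank A ≤ n, then rank B ≤ C(n + k − 1, k − 1). -/

import Mathlib

open Finset

lemma aux_pack {I J α : Type*} (T : Finset α) (N : ℕ) (hT : T.card ≤ N)
    (f : I → α → ℝ) (g : J → α → ℝ) :
    ∃ (U : I → Fin N → ℝ) (V : J → Fin N → ℝ),
      ∀ i j, ∑ t ∈ T.attach, f i t * g j t = ∑ s, U i s * V j s := by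
  classical
  set e := T.equivFin.symm with he
  refine ⟨fun i s => if h : (s : ℕ) < T.card then f i (e ⟨s, h⟩) else 0,
      fun j s => if h : (s : ℕ) < T.card then g j (e ⟨s, h⟩) else 0, fun i j => ?_⟩
  have key : ∑ s : Fin N, (if h : (s : ℕ) < T.card then f i (e ⟨s, h⟩) else 0)
      * (if h : (s : ℕ) < T.card then g j (e ⟨s, h⟩) else 0)
      = ∑ s ∈ (univ : Finset (Fin T.card)).map (Fin.castLEEmb hT),
        (if h : (s : ℕ) < T.card then f i (e ⟨s, h⟩) else 0)
        * (if h : (s : ℕ) < T.card then g j (e ⟨s, h⟩) else 0) := by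
    refine (Finset.sum_subset (subset_univ _) fun s _ hs => ?_).symm
    have : ¬ ((s : ℕ) < T.card) := by
      intro h
      exact hs (mem_map.2 ⟨⟨s, h⟩, mem_univ _, by simp [Fin.castLEEmb]⟩)
    simp [this]
  rw [key, Finset.sum_map]
  have : ∀ s : Fin T.card,
      (if h : ((Fin.castLEEmb hT s : Fin N) : ℕ) < T.card then f i (e ⟨_, h⟩) else 0)
      * (if h : ((Fin.castLEEmb hT s : Fin N) : ℕ) < T.card then g j (e ⟨_, h⟩) else 0)
      = f i (e s) * g j (e s) := by
    intro s
    have hs : ((Fin.castLEEmb hT s : Fin N) : ℕ) < T.card := s.2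
    rw [dif_pos hs, dif_pos hs]
    congr <;> exact congrArg _ (by ext; simp)
  rw [Finset.sum_congr rfl fun s _ => this s]
  rw [Finset.sum_attach T (fun t => f i t * g j t),
    ← Finset.sum_coe_sort T (fun t => f i t * g j t),
    ← Equiv.sum_comp e (fun x => f i x.1 * g j x.1)]

lemma aux_card (n k : ℕ) (hk : 0 < k) :
    ∑ m ∈ range k, (n + m - 1).choose m = (n + k - 1).choose (k - 1) := by
  obtain ⟨K, rfl⟩ : ∃ K, k = K + 1 := ⟨k - 1, by omega⟩
  cases n with
  | zero =>
      rw [Finset.sum_eq_single 0]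
      · simp
      · intro m _ hm
        exact Nat.choose_eq_zero_of_lt (by omega)
      · simp
  | succ N =>
      have h1 : ∀ m, (N + 1 + m - 1).choose m = (m + N).choose N := by
        intro m
        rw [show N + 1 + m - 1 = m + N by omega, Nat.choose_symm_add]
      rw [Finset.sum_congr rfl fun m _ => h1 m, Nat.sum_range_add_choose K N]
      rw [show K + N + 1 = (N + 1) + K by omega, Nat.choose_symm_add,
        show (N + 1) + K = K + 1 + N by omega]
      norm_num
      rw [show K + 1 + N = N + 1 + K by omega]

theorem stmt10 {I J : Type*} (n k : ℕ) (hk : 0 < k) (a : I → J → ℝ) (φ : ℝ → ℝ)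
    (S : Finset ℝ) (hS : S.card ≤ k) (hval : ∀ i j, a i j ∈ S)
    (u : I → Fin n → ℝ) (v : J → Fin n → ℝ)
    (ha : ∀ i j, a i j = ∑ t, u i t * v j t) :
    ∃ (U : I → Fin ((n + k - 1).choose (k - 1)) → ℝ)
      (V : J → Fin ((n + k - 1).choose (k - 1)) → ℝ),
      ∀ i j, φ (a i j) = ∑ t, U i t * V j t := by
  classical
  -- interpolating polynomial
  set p : Polynomial ℝ := Lagrange.interpolate S id φ with hp
  have hinj : Set.InjOn (id : ℝ → ℝ) S := Function.injective_id.injOn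
  have heval : ∀ i j, φ (a i j) = p.eval (a i j) := by
    intro i j
    have := Lagrange.eval_interpolate_at_node φ hinj (hval i j)
    exact this.symm
  have hdeg : p.natDegree < k := by
    by_cases h0 : p = 0
    · simpa [h0] using hk
    · rw [Polynomial.natDegree_lt_iff_degree_lt h0]
      exact lt_of_lt_of_le (Lagrange.degree_interpolate_lt φ hinj) (by exact_mod_cast hS)
  -- expansion
  set T : Finset ((m : ℕ) × Sym (Fin n) m) :=
    (range k).sigma (fun m => (univ : Finset (Fin n)).sym m) with hT
  have hexp : ∀ i j, φ (a i j) = ∑ x ∈ T.attach,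
      (p.coeff x.1.1 * (x.1.2.val.countPerms : ℝ) * (x.1.2.val.map (u i)).prod)
      * (x.1.2.val.map (v j)).prod := by
    intro i j
    rw [Finset.sum_attach T (fun x => (p.coeff x.1 * (x.2.val.countPerms : ℝ)
      * (x.2.val.map (u i)).prod) * (x.2.val.map (v j)).prod)]
    rw [heval i j, Polynomial.eval_eq_sum_range' hdeg, Finset.sum_sigma]
    refine Finset.sum_congr rfl fun m _ => ?_
    rw [ha i j, show (∑ t, u i t * v j t) = Finset.univ.sum (fun t => u i t * v j t) from rfl,
      Finset.sum_pow, Finset.mul_sum]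
    refine Finset.sum_congr rfl fun s _ => ?_
    rw [Multiset.prod_map_mul]
    ring
  have hcard : T.card ≤ (n + k - 1).choose (k - 1) := by
    rw [hT, Finset.card_sigma]
    rw [← aux_card n k hk]
    refine le_of_eq (Finset.sum_congr rfl fun m _ => ?_)
    rw [Finset.sym_univ, Finset.card_univ, Sym.card_sym_eq_choose, Fintype.card_fin]
  obtain ⟨U, V, hUV⟩ := aux_pack T _ hcard
    (fun i x => p.coeff x.1 * (x.2.val.countPerms : ℝ) * (x.2.val.map (u i)).prod)
    (fun j x => (x.2.val.map (v j)).prod)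
  exact ⟨U, V, fun i j => (hexp i j).trans (hUV i j)⟩
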